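/- Suppose contravariant connections (∇, †∇) with symbols Γ_k^{ij}, †Γ_k^{ij} satisfy π^{ik} Γ_k^{jl} = π^{jk} †Γ_k^{il} and †∇ is torsion-free (−†Γ_k^{ij} + †Γ_k^{ji} − ∂π^{ij}/∂x^k = 0). Then the averaged connection with Christoffel symbols Γ̂_k^{ij} = (1/3)(Γ_k^{ij} + Γ_k^{ji} + ∂π^{ji}/∂x^k + †Γ_k^{ij}) is torsion-free and satisfies π^{ik} Γ̂_k^{jl} = π^{jk} Γ̂_k^{il} (hence is a torsion-free Poisson contravariant connection). -/

import Mathlib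

/-- Partial derivative of a function on `ℝⁿ` in the `k`-th coordinate direction. -/
noncomputable def pd {n : ℕ} (k : Fin n) (f : (Fin n → ℝ) → ℝ) (x : Fin n → ℝ) : ℝ :=
  fderiv ℝ f x (Pi.single k 1)

/-- If `(∇, †∇)` (symbols `Γ i j k`, `dΓ i j k`) are associated and `†∇` is torsion-free,
then the averaged connection `Γ̂_k^{ij} = (1/3)(Γ_k^{ij} + Γ_k^{ji} + ∂π^{ji}/∂x^k + †Γ_k^{ij})`
is torsion-free and satisfies `π^{ik} Γ̂_k^{jl} = π^{jk} Γ̂_k^{il}`, hence is a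
torsion-free Poisson contravariant connection. -/
theorem averaged_connection_torsion_free_poisson
    (n : ℕ) (π : Fin n → Fin n → (Fin n → ℝ) → ℝ)
    (Γ dΓ : Fin n → Fin n → Fin n → (Fin n → ℝ) → ℝ)
    (hπ : ∀ i j, ContDiff ℝ (⊤ : ℕ∞) (π i j))
    (hanti : ∀ i j (x : Fin n → ℝ), π i j x = -π j i x)
    (hJac : ∀ i j l (x : Fin n → ℝ),
      ∑ s, (π i s x * pd s (π j l) x + π j s x * pd s (π l i) x
            + π l s x * pd s (π i j) x) = 0)
    (hassoc : ∀ i j l (x : Fin n → ℝ),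
      ∑ k, π i k x * Γ j l k x = ∑ k, π j k x * dΓ i l k x)
    (htf : ∀ i j k (x : Fin n → ℝ), -dΓ i j k x + dΓ j i k x - pd k (π i j) x = 0)
    (hΓ : Fin n → Fin n → Fin n → (Fin n → ℝ) → ℝ)
    (hhΓ : ∀ i j k (x : Fin n → ℝ),
      hΓ i j k x = (1/3) * (Γ i j k x + Γ j i k x + pd k (π j i) x + dΓ i j k x)) :
    (∀ i j k (x : Fin n → ℝ), -hΓ i j k x + hΓ j i k x - pd k (π i j) x = 0)
    ∧ (∀ i j l (x : Fin n → ℝ),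
        ∑ k, π i k x * hΓ j l k x = ∑ k, π j k x * hΓ i l k x) := by
  have pdneg : ∀ (a b k : Fin n) (x : Fin n → ℝ), pd k (π a b) x = -pd k (π b a) x := by
    intro a b k x
    have hfun : π a b = fun y => -π b a y := funext fun y => hanti a b y
    simp only [pd, hfun, fderiv_fun_neg, ContinuousLinearMap.neg_apply]
  constructor
  · intro i j k x
    have h1 := htf i j k x
    have h2 := pdneg j i k x
    rw [hhΓ i j k x, hhΓ j i k x]
    rw [h2]
    linarith
  · intro i j l x
    have expand : ∀ a b : Fin n,
        ∑ k, π a k x * hΓ b l k x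
          = (1/3) * (∑ k, π a k x * Γ b l k x) + (1/3) * (∑ k, π a k x * Γ l b k x)
            + (1/3) * (∑ k, π a k x * pd k (π l b) x)
            + (1/3) * (∑ k, π a k x * dΓ b l k x) := by
      intro a b
      rw [Finset.mul_sum, Finset.mul_sum, Finset.mul_sum, Finset.mul_sum,
        ← Finset.sum_add_distrib, ← Finset.sum_add_distrib, ← Finset.sum_add_distrib]
      exact Finset.sum_congr rfl fun k _ => by rw [hhΓ]; ring
    rw [expand i j, expand j i]
    have A1 := hassoc i j l x
    have A2 := hassoc j i l x
    have A3 := hassoc i l j x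
    have A4 := hassoc j l i x
    have hJ := hJac i j l x
    rw [Finset.sum_add_distrib, Finset.sum_add_distrib] at hJ
    have hD : ∑ k, π l k x * dΓ i j k x - ∑ k, π l k x * dΓ j i k x
        = -∑ k, π l k x * pd k (π i j) x := by
      rw [← Finset.sum_sub_distrib, ← Finset.sum_neg_distrib]
      exact Finset.sum_congr rfl fun k _ => by linear_combination (-π l k x) * htf i j k x
    have hP1 : ∑ k, π i k x * pd k (π l j) x = -∑ k, π i k x * pd k (π j l) x := by
      rw [← Finset.sum_neg_distrib]
      exact Finset.sum_congr rfl fun k _ => by rw [pdneg l j]; ring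
    linarith [A1, A2, A3, A4, hJ, hD, hP1]
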